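/- There exists a constant C such that for all k₁, k₂, k₃, j₁, j₂, j₃ ∈ ℕ with |k₁ − k₃| ≤ 5 and k₂ ≤ k₁ − 10, and all nonnegative f₁, f₂, f₃ ∈ L²(ℤ² × ℝ) with supp(f_i) ⊆ D_{k_i, ≤ j_i} for i = 1, 2, 3: ∫_{ℤ² × ℝ} (f₁ * f₂) f₃ ≤ C ‖f₁‖_{L²} 2^{j₂/2} 2^{k₂/2} ‖f₂‖_{L²} (1 + 2^{(j₃ − 2k₁)/2}) ‖f₃‖_{L²}. -/

import Mathlib

set_option maxHeartbeats 2000000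

open MeasureTheory
open scoped ENNReal

/-- Counting measure on `ℤ²` times Lebesgue measure on `ℝ`. -/
noncomputable def muZ : Measure ((ℤ × ℤ) × ℝ) :=
  (Measure.count : Measure (ℤ × ℤ)).prod (volume : Measure ℝ)

/-- Convolution on `ℤ² × ℝ` of nonnegative functions, valued in `ℝ≥0∞`:
`(f * g)(ζ, τ) = ∑_{ζ'} ∫ f(ζ', τ') g(ζ - ζ', τ - τ') dτ'`. -/
noncomputable def convZ (f g : (ℤ × ℤ) × ℝ → ℝ) (p : (ℤ × ℤ) × ℝ) : ℝ≥0∞ :=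
  ∑' ζ : ℤ × ℤ, ∫⁻ τ : ℝ,
    ENNReal.ofReal (f (ζ, τ)) * ENNReal.ofReal (g (p.1 - ζ, p.2 - τ))

/-- The Zakharov-Kuznetsov dispersion relation `ω(ξ,η) = ξ³ + ξη²` on `ℤ²`. -/
def omegaZK (ζ : ℤ × ℤ) : ℝ := ((ζ.1 : ℝ)) ^ 3 + (ζ.1 : ℝ) * ((ζ.2 : ℝ)) ^ 2

/-- The isotropic frequency-modulation region
`D_{k,≤j} = {(ξ,η,τ) : 2^{k-1} ≤ |(ξ,η)| < 2^k, |τ - ω(ξ,η)| ≤ 2^j}`,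
with `|(ξ,η)|` the Euclidean norm. -/
noncomputable def DZ (k j : ℕ) : Set ((ℤ × ℤ) × ℝ) :=
  {p | (2:ℝ) ^ ((k : ℤ) - 1) ≤ Real.sqrt (((p.1.1 : ℝ)) ^ 2 + ((p.1.2 : ℝ)) ^ 2) ∧
    Real.sqrt (((p.1.1 : ℝ)) ^ 2 + ((p.1.2 : ℝ)) ^ 2) < (2:ℝ) ^ (k : ℤ) ∧
    |p.2 - omegaZK p.1| ≤ (2:ℝ) ^ (j : ℤ)}

namespace ZKaux

abbrev GG := (ℤ × ℤ) × ℝ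

instance : SFinite (Measure.count : Measure (ℤ × ℤ)) := by
  unfold Measure.count; infer_instance

instance : SFinite muZ := by unfold muZ; infer_instance

lemma measSet_Z2 (A : Set (ℤ × ℤ)) : MeasurableSet A := A.to_countable.measurableSet

lemma meas_Z2 {β : Type*} [MeasurableSpace β] (f : ℤ × ℤ → β) : Measurable f :=
  measurable_from_prod_countable_left fun _ => measurable_of_countable _

lemma lintegral_muZ (F : GG → ℝ≥0∞) (hF : AEMeasurable F muZ) :
    ∫⁻ p, F p ∂muZ = ∑' ζ : ℤ × ℤ, ∫⁻ τ : ℝ, F (ζ, τ) := by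
  rw [muZ] at hF ⊢
  rw [MeasureTheory.lintegral_prod _ hF, lintegral_count]

lemma lintegral_real_sub (f : ℝ → ℝ≥0∞) (a : ℝ) : ∫⁻ t, f (a - t) = ∫⁻ t, f t := by
  have h1 := MeasureTheory.lintegral_map_equiv (μ := (volume : Measure ℝ)) f
    (MeasurableEquiv.subLeft a)
  have h2 : (volume : Measure ℝ).map (⇑(MeasurableEquiv.subLeft a)) = volume := by
    have : ⇑(MeasurableEquiv.subLeft a) = fun t => a - t := rfl
    rw [this]; exact MeasureTheory.Measure.map_sub_left_eq_self volume a
  rw [h2] at h1; exact h1.symm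

lemma lintegral_muZ_sub (F : GG → ℝ≥0∞) (hF : Measurable F) (p : GG) :
    ∫⁻ q, F (p.1 - q.1, p.2 - q.2) ∂muZ = ∫⁻ q, F q ∂muZ := by
  have hmeas : Measurable fun q : GG => F (p.1 - q.1, p.2 - q.2) := by
    apply hF.comp
    exact ((meas_Z2 (fun z : ℤ × ℤ => p.1 - z)).comp measurable_fst).prod
      (measurable_const.sub measurable_snd)
  rw [lintegral_muZ _ hmeas.aemeasurable, lintegral_muZ _ hF.aemeasurable]
  have hinner : ∀ ζ : ℤ × ℤ, ∫⁻ τ, F (p.1 - ζ, p.2 - τ) = ∫⁻ τ, F (p.1 - ζ, τ) :=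
    fun ζ => lintegral_real_sub (fun t => F (p.1 - ζ, t)) p.2
  simp_rw [hinner]
  exact (Equiv.subLeft p.1).tsum_eq fun ζ => ∫⁻ τ, F (ζ, τ)

lemma measurableSet_DZ (k j : ℕ) : MeasurableSet (DZ k j) := by
  have h1 : MeasurableSet {p : GG | (2:ℝ) ^ ((k : ℤ) - 1) ≤
      Real.sqrt (((p.1.1 : ℝ)) ^ 2 + ((p.1.2 : ℝ)) ^ 2) ∧
      Real.sqrt (((p.1.1 : ℝ)) ^ 2 + ((p.1.2 : ℝ)) ^ 2) < (2:ℝ) ^ (k : ℤ)} := by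
    have : {p : GG | (2:ℝ) ^ ((k : ℤ) - 1) ≤
        Real.sqrt (((p.1.1 : ℝ)) ^ 2 + ((p.1.2 : ℝ)) ^ 2) ∧
        Real.sqrt (((p.1.1 : ℝ)) ^ 2 + ((p.1.2 : ℝ)) ^ 2) < (2:ℝ) ^ (k : ℤ)} =
        Prod.fst ⁻¹' {ζ : ℤ × ℤ | (2:ℝ) ^ ((k : ℤ) - 1) ≤
          Real.sqrt (((ζ.1 : ℝ)) ^ 2 + ((ζ.2 : ℝ)) ^ 2) ∧
          Real.sqrt (((ζ.1 : ℝ)) ^ 2 + ((ζ.2 : ℝ)) ^ 2) < (2:ℝ) ^ (k : ℤ)} := rfl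
    rw [this]
    exact measurable_fst (measSet_Z2 _)
  have h2 : MeasurableSet {p : GG | |p.2 - omegaZK p.1| ≤ (2:ℝ) ^ (j : ℤ)} := by
    have hm : Measurable fun p : GG => |p.2 - omegaZK p.1| :=
      (measurable_snd.sub ((meas_Z2 omegaZK).comp measurable_fst)).abs
    exact hm measurableSet_Iic
  have : DZ k j = _ ∩ _ := rfl
  have hset : DZ k j = ({p : GG | (2:ℝ) ^ ((k : ℤ) - 1) ≤
      Real.sqrt (((p.1.1 : ℝ)) ^ 2 + ((p.1.2 : ℝ)) ^ 2) ∧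
      Real.sqrt (((p.1.1 : ℝ)) ^ 2 + ((p.1.2 : ℝ)) ^ 2) < (2:ℝ) ^ (k : ℤ)} ∩
      {p : GG | |p.2 - omegaZK p.1| ≤ (2:ℝ) ^ (j : ℤ)}) := by
    ext p; simp only [DZ, Set.mem_setOf_eq, Set.mem_inter_iff]; tauto
  rw [hset]; exact h1.inter h2

lemma ae_sections {f g : GG → ℝ} (h : f =ᵐ[muZ] g) :
    ∀ ζ : ℤ × ℤ, (fun τ => f (ζ, τ)) =ᵐ[volume] (fun τ => g (ζ, τ)) := by
  intro ζ
  have hN : muZ {p : GG | f p ≠ g p} = 0 := h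
  obtain ⟨N', hsub, hmeas, h0⟩ := exists_measurable_superset_of_null hN
  rw [muZ] at h0
  have hae := (Measure.measure_prod_null hmeas).mp h0
  have hall : ∀ z : ℤ × ℤ, volume (Prod.mk z ⁻¹' N') = 0 := by
    intro z
    by_contra hz
    have hbad : (Measure.count : Measure (ℤ × ℤ)) {z' | volume (Prod.mk z' ⁻¹' N') ≠ 0} = 0 := hae
    have : ({z' | volume (Prod.mk z' ⁻¹' N') ≠ 0} : Set (ℤ × ℤ)) = ∅ :=
      Measure.count_eq_zero_iff.mp hbad
    exact absurd (Set.eq_empty_iff_forall_notMem.mp this z) (by simpa using hz)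
  have hsub2 : {τ : ℝ | f (ζ, τ) ≠ g (ζ, τ)} ⊆ Prod.mk ζ ⁻¹' N' := fun τ hτ => hsub hτ
  exact measure_mono_null hsub2 (hall ζ)

lemma null_reflect (a : ℝ) {N : Set ℝ} (h : volume N = 0) :
    volume ((fun t => a - t) ⁻¹' N) = 0 := by
  obtain ⟨N', hsub, hmeas, h0⟩ := exists_measurable_superset_of_null h
  have hmp : MeasurePreserving (fun t : ℝ => a - t) volume volume :=
    ⟨measurable_const.sub measurable_id, MeasureTheory.Measure.map_sub_left_eq_self volume a⟩
  have heq : volume ((fun t : ℝ => a - t) ⁻¹' N') = volume N' := by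
    conv_rhs => rw [← hmp.map_eq]
    rw [Measure.map_apply hmp.measurable hmeas]
  refine measure_mono_null (Set.preimage_mono hsub) ?_
  rw [heq, h0]

lemma convZ_congr {f₁ g₁ f₂ g₂ : GG → ℝ} (h₁ : f₁ =ᵐ[muZ] g₁) (h₂ : f₂ =ᵐ[muZ] g₂)
    (p : GG) : convZ f₁ f₂ p = convZ g₁ g₂ p := by
  unfold convZ
  refine tsum_congr fun ζ => ?_
  refine lintegral_congr_ae ?_
  have ha := ae_sections h₁ ζ
  have hb := ae_sections h₂ (p.1 - ζ)
  have hbN : volume {τ : ℝ | f₂ (p.1 - ζ, τ) ≠ g₂ (p.1 - ζ, τ)} = 0 := hb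
  have hb2 : volume {τ : ℝ | f₂ (p.1 - ζ, p.2 - τ) ≠ g₂ (p.1 - ζ, p.2 - τ)} = 0 := by
    refine measure_mono_null ?_ (null_reflect p.2 hbN)
    intro τ hτ; exact hτ
  have hb3 : (fun τ => f₂ (p.1 - ζ, p.2 - τ)) =ᵐ[volume]
      (fun τ => g₂ (p.1 - ζ, p.2 - τ)) := hb2
  filter_upwards [ha, hb3] with τ h1 h2
  rw [h1, h2]

def eexp (k₁ j₂ j₃ : ℕ) : ℕ := (max j₂ j₃ + 2) - (2 * k₁ - 16)

/-- The "resonance-constrained" frequency set. -/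
def Zres (k₂ k₃ j₂ j₃ : ℕ) (q : GG) : Set (ℤ × ℤ) :=
  {ζ | Real.sqrt (((ζ.1 - q.1.1 : ℤ) : ℝ) ^ 2 + ((ζ.2 - q.1.2 : ℤ) : ℝ) ^ 2) < (2:ℝ) ^ (k₂ : ℤ) ∧
    (2:ℝ) ^ ((k₃ : ℤ) - 1) ≤ Real.sqrt ((ζ.1 : ℝ) ^ 2 + (ζ.2 : ℝ) ^ 2) ∧
    |q.2 + omegaZK (ζ.1 - q.1.1, ζ.2 - q.1.2) - omegaZK ζ| ≤ (2:ℝ) ^ (j₂ : ℤ) + (2:ℝ) ^ (j₃ : ℤ)}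

lemma abs_lt_of_sq_lt_sq'' {x A : ℝ} (h : x ^ 2 < A ^ 2) (hA : 0 ≤ A) : |x| < A := by
  by_contra h'
  push_neg at h'
  have h2 : A ^ 2 ≤ |x| ^ 2 := pow_le_pow_left₀ hA h' 2
  rw [sq_abs] at h2
  linarith

lemma telescope (c : ℤ → ℝ) (Dv : ℝ) (a : ℤ) :
    ∀ b : ℤ, a ≤ b →
      ((∀ u : ℤ, a ≤ u → u < b → Dv ≤ c u - c (u + 1)) →
        Dv * ((b : ℝ) - (a : ℝ)) ≤ c a - c b) := by
  refine Int.le_induction ?_ ?_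
  · intro _; simp
  · intro n hn ih hgap
    have h1 : Dv * ((n : ℝ) - (a : ℝ)) ≤ c a - c n :=
      ih fun u hu hun => hgap u hu (by omega)
    have h2 : Dv ≤ c n - c (n + 1) := hgap n hn (by omega)
    have h3 : Dv * (((n + 1 : ℤ) : ℝ) - (a : ℝ)) = Dv * ((n : ℝ) - a) + Dv := by
      push_cast; ring
    rw [h3]
    linarith

lemma sep (k₁ k₂ k₃ j₂ j₃ : ℕ) (hk23 : k₂ + 5 ≤ k₃) (hk31 : k₁ ≤ k₃ + 5) (hk1 : 10 ≤ k₁)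
    (q : GG) (η ξ ξ' : ℤ) (hle : ξ ≤ ξ')
    (hZ : (ξ, η) ∈ Zres k₂ k₃ j₂ j₃ q) (hZ' : (ξ', η) ∈ Zres k₂ k₃ j₂ j₃ q) :
    ξ' - ξ ≤ 2 ^ eexp k₁ j₂ j₃ := by
  obtain ⟨ζ₁, τ₁⟩ := q
  obtain ⟨ξ₁, η₁⟩ := ζ₁
  obtain ⟨A, hAdef⟩ : ∃ A : ℝ, A = (2:ℝ) ^ (k₂ : ℕ) := ⟨_, rfl⟩
  obtain ⟨W, hWdef⟩ : ∃ W : ℝ, W = (2:ℝ) ^ (k₃ - 4 : ℕ) := ⟨_, rfl⟩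
  have hA0 : (0:ℝ) < A := by rw [hAdef]; positivity
  have hA1 : (1:ℝ) ≤ A := by rw [hAdef]; exact one_le_pow₀ (by norm_num)
  have hW2 : (2:ℝ) ≤ W := by
    rw [hWdef]
    calc (2:ℝ) = 2 ^ 1 := (pow_one 2).symm
    _ ≤ 2 ^ (k₃ - 4 : ℕ) := pow_le_pow_right₀ (by norm_num) (by omega)
  have h2AW : 2 * A ≤ W := by
    rw [hAdef, hWdef]
    calc 2 * (2:ℝ) ^ (k₂:ℕ) = 2 ^ (k₂ + 1) := by ring
    _ ≤ 2 ^ (k₃ - 4 : ℕ) := pow_le_pow_right₀ (by norm_num) (by omega)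
  -- unpack memberships
  obtain ⟨hs2, hs3, hres⟩ := hZ
  obtain ⟨hs2', hs3', hres'⟩ := hZ'
  simp only at hs2 hs2' hs3 hs3' hres hres'
  -- convert shell conditions to square form
  have hzpow : (2:ℝ) ^ (k₂ : ℤ) = A := by rw [hAdef, zpow_natCast]
  have hsq2 : ((ξ:ℝ) - ξ₁) ^ 2 + ((η:ℝ) - η₁) ^ 2 < A ^ 2 := by
    have := (Real.sqrt_lt' (by positivity : (0:ℝ) < A)).mp (by rw [← hzpow]; exact_mod_cast hs2)
    push_cast at this ⊢
    linarith
  have hsq2' : ((ξ':ℝ) - ξ₁) ^ 2 + ((η:ℝ) - η₁) ^ 2 < A ^ 2 := by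
    have := (Real.sqrt_lt' (by positivity : (0:ℝ) < A)).mp (by rw [← hzpow]; exact_mod_cast hs2')
    push_cast at this ⊢
    linarith
  have h64 : 64 * W ^ 2 ≤ (ξ:ℝ) ^ 2 + (η:ℝ) ^ 2 := by
    have hc : (2:ℝ) ^ ((k₃:ℤ) - 1) = 8 * W := by
      have : ((k₃:ℤ) - 1) = ((k₃ - 4 : ℕ) : ℤ) + 3 := by omega
      rw [this, zpow_add₀ (by norm_num : (2:ℝ) ≠ 0), zpow_natCast, hWdef]
      norm_num
      ring
    have h := (Real.le_sqrt (by positivity) (by positivity)).mp hs3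
    rw [hc] at h
    have h8 : (8 * W) ^ 2 = 64 * W ^ 2 := by ring
    linarith
  have hax : |(ξ:ℝ) - ξ₁| < A := by
    apply abs_lt_of_sq_lt_sq'' _ hA0.le
    have := sq_nonneg ((η:ℝ) - η₁); linarith
  have hax' : |(ξ':ℝ) - ξ₁| < A := by
    apply abs_lt_of_sq_lt_sq'' _ hA0.le
    have := sq_nonneg ((η:ℝ) - η₁); linarith
  have hay : |(η:ℝ) - η₁| < A := by
    apply abs_lt_of_sq_lt_sq'' _ hA0.le
    have := sq_nonneg ((ξ:ℝ) - ξ₁); linarith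
  obtain ⟨c, hcdef⟩ : ∃ c : ℤ → ℝ, c = fun u => τ₁ + omegaZK (u - ξ₁, η - η₁) - omegaZK (u, η) :=
    ⟨_, rfl⟩
  have hgapid : ∀ u : ℤ, c u - c (u + 1) =
      3 * (u:ℝ) ^ 2 + 3 * (u:ℝ) + (η:ℝ) ^ 2
        - 3 * ((u:ℝ) - ξ₁) ^ 2 - 3 * ((u:ℝ) - ξ₁) - ((η:ℝ) - η₁) ^ 2 := by
    intro u
    rw [hcdef]
    simp only [omegaZK]
    push_cast
    ring
  obtain ⟨Dv, hDdef⟩ : ∃ Dv : ℝ, Dv = (2:ℝ) ^ (2 * k₁ - 16 : ℕ) := ⟨_, rfl⟩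
  have hDv4W : Dv ≤ 4 * W ^ 2 := by
    have h4 : (4:ℝ) * W ^ 2 = 2 ^ (2 * k₃ - 6 : ℕ) := by
      rw [hWdef, ← pow_mul]
      have : (4:ℝ) = 2 ^ 2 := by norm_num
      rw [this, ← pow_add]
      congr 1
      omega
    rw [hDdef, h4]
    exact pow_le_pow_right₀ (by norm_num) (by omega)
  have hgap : ∀ u : ℤ, ξ ≤ u → u < ξ' → Dv ≤ c u - c (u + 1) := by
    intro u h1 h2
    have hu1 : (ξ:ℝ) ≤ (u:ℝ) := by exact_mod_cast h1
    have hu2 : (u:ℝ) ≤ (ξ':ℝ) := by exact_mod_cast h2.le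
    have hl1 := abs_lt.mp hax
    have hl2 := abs_lt.mp hax'
    have huc : |(u:ℝ) - ξ₁| ≤ A := abs_le.mpr ⟨by linarith, by linarith⟩
    have hucl := abs_le.mp huc
    have hkey : 8 * W ^ 2 ≤ (u:ℝ) ^ 2 + (η:ℝ) ^ 2 := by
      by_cases hc : 32 * W ^ 2 ≤ (η:ℝ) ^ 2
      · have := sq_nonneg ((u:ℝ)); have := sq_nonneg W; linarith
      · push_neg at hc
        have hxi2 : 25 * W ^ 2 ≤ (ξ:ℝ) ^ 2 := by linarith [sq_nonneg W]
        have habs : 5 * W ≤ |(ξ:ℝ)| := by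
          by_contra h'
          push_neg at h'
          have hte : (ξ:ℝ) ^ 2 < 25 * W ^ 2 := by
            have h0 := abs_nonneg (ξ:ℝ)
            nlinarith [sq_abs (ξ:ℝ), mul_self_lt_mul_self (abs_nonneg (ξ:ℝ)) h']
          linarith
        rcases le_abs.mp habs with hpos | hneg
        · have hu5 : 5 * W ≤ (u:ℝ) := by linarith
          nlinarith [mul_le_mul_of_nonneg_left hu5 (by linarith : (0:ℝ) ≤ 5 * W),
            sq_nonneg ((u:ℝ) - 5 * W), sq_nonneg W]
        · -- ξ ≤ -5W ; u ≤ ξ' < ξ + W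
          have hxx' : (ξ':ℝ) - (ξ:ℝ) < 2 * A := by linarith
          have hu4 : (u:ℝ) ≤ -4 * W := by linarith
          nlinarith [sq_nonneg ((u:ℝ) + 4 * W), sq_nonneg W,
            mul_nonneg (by linarith : (0:ℝ) ≤ -4 * W - (u:ℝ)) (by linarith : (0:ℝ) ≤ W)]
    rw [hgapid u]
    have hq1 : ((u:ℝ) - ξ₁) ^ 2 ≤ A ^ 2 := by
      have := pow_le_pow_left₀ (abs_nonneg ((u:ℝ) - ξ₁)) huc 2
      rwa [sq_abs] at this
    have hq2 : ((η:ℝ) - η₁) ^ 2 ≤ A ^ 2 := by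
      have := pow_le_pow_left₀ (abs_nonneg ((η:ℝ) - η₁)) hay.le 2
      rwa [sq_abs] at this
    have hcube : -3 ≤ 2 * (u:ℝ) ^ 2 + 3 * (u:ℝ) := by nlinarith [sq_nonneg (2 * (u:ℝ) + 1)]
    have hXW : 3 + 3 * A + 4 * A ^ 2 ≤ 4 * W ^ 2 := by
      have hs1 : (2 * A) ^ 2 ≤ W ^ 2 := pow_le_pow_left₀ (by linarith) h2AW 2
      have hs2 : 0 ≤ W * (W - 2) := mul_nonneg (by linarith) (by linarith)
      nlinarith [hs1, hs2]
    linarith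
  have htel := telescope c Dv ξ ξ' hle hgap
  -- resonance bounds
  obtain ⟨T, hTdef⟩ : ∃ T : ℝ, T = (2:ℝ) ^ (j₂ : ℕ) + (2:ℝ) ^ (j₃ : ℕ) := ⟨_, rfl⟩
  have hzj : (2:ℝ) ^ (j₂:ℤ) + (2:ℝ) ^ (j₃:ℤ) = T := by
    rw [hTdef, zpow_natCast, zpow_natCast]
  have hcξ : |c ξ| ≤ T := by rw [hcdef, ← hzj]; exact hres
  have hcξ' : |c ξ'| ≤ T := by rw [hcdef, ← hzj]; exact hres'
  have habs1 := abs_le.mp hcξ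
  have habs2 := abs_le.mp hcξ'
  have hT2 : 2 * T ≤ (2:ℝ) ^ (max j₂ j₃ + 2 : ℕ) := by
    rw [hTdef]
    have a1 : (2:ℝ) ^ (j₂:ℕ) ≤ 2 ^ (max j₂ j₃) :=
      pow_le_pow_right₀ (by norm_num) (le_max_left _ _)
    have a2 : (2:ℝ) ^ (j₃:ℕ) ≤ 2 ^ (max j₂ j₃) :=
      pow_le_pow_right₀ (by norm_num) (le_max_right _ _)
    have : (2:ℝ) ^ (max j₂ j₃ + 2) = 4 * 2 ^ (max j₂ j₃) := by rw [pow_add]; ring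
    rw [this]; linarith
  have hDvB : (2:ℝ) ^ (max j₂ j₃ + 2 : ℕ) ≤ Dv * 2 ^ (eexp k₁ j₂ j₃) := by
    rw [hDdef, ← pow_add]
    refine pow_le_pow_right₀ (by norm_num) ?_
    unfold eexp
    omega
  have hDvpos : (0:ℝ) < Dv := by rw [hDdef]; positivity
  have hfinal : ((ξ':ℤ):ℝ) - ((ξ:ℤ):ℝ) ≤ 2 ^ (eexp k₁ j₂ j₃) := by
    have h1 : Dv * ((ξ':ℝ) - ξ) ≤ Dv * 2 ^ (eexp k₁ j₂ j₃) := by linarith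
    exact le_of_mul_le_mul_left h1 hDvpos
  have : ((ξ' - ξ : ℤ):ℝ) ≤ ((2 ^ (eexp k₁ j₂ j₃) : ℤ):ℝ) := by push_cast; push_cast at hfinal; linarith
  exact_mod_cast this

lemma measurableSet_E (k₂ k₃ j₂ j₃ : ℕ) (q : GG) :
    MeasurableSet {p : GG | (p.1 - q.1, p.2 - q.2) ∈ DZ k₂ j₂ ∧ p ∈ DZ k₃ j₃} := by
  have h1 : Measurable fun p : GG => ((p.1 - q.1 : ℤ × ℤ), (p.2 - q.2 : ℝ)) :=
    ((meas_Z2 (fun z : ℤ × ℤ => z - q.1)).comp measurable_fst).prod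
      (measurable_snd.sub measurable_const)
  exact (h1 (measurableSet_DZ k₂ j₂)).inter (measurableSet_DZ k₃ j₃)

lemma measure_E_le (k₁ k₂ k₃ j₂ j₃ : ℕ) (hk13 : |(k₁:ℤ) - (k₃:ℤ)| ≤ 5)
    (hk2 : (k₂:ℤ) ≤ (k₁:ℤ) - 10) (q : GG) :
    muZ {p : GG | (p.1 - q.1, p.2 - q.2) ∈ DZ k₂ j₂ ∧ p ∈ DZ k₃ j₃} ≤
      (2:ℝ≥0∞) ^ (min j₂ j₃ + k₂ + eexp k₁ j₂ j₃ + 5) := by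
  classical
  have habs := abs_le.mp hk13
  have hk1 : 10 ≤ k₁ := by omega
  have hk23 : k₂ + 5 ≤ k₃ := by omega
  have hk31 : k₁ ≤ k₃ + 5 := by omega
  obtain ⟨L, hLdef⟩ : ∃ L : ℝ≥0∞, L = ENNReal.ofReal ((2:ℝ) ^ (min j₂ j₃ + 1)) := ⟨_, rfl⟩
  have hω : ∀ ζ : ℤ × ℤ, omegaZK (ζ.1 - q.1.1, ζ.2 - q.1.2) = omegaZK (ζ - q.1) :=
    fun ζ => rfl
  -- section bound
  have hsec : ∀ ζ : ℤ × ℤ,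
      volume (Prod.mk ζ ⁻¹' {p : GG | (p.1 - q.1, p.2 - q.2) ∈ DZ k₂ j₂ ∧ p ∈ DZ k₃ j₃}) ≤
      Set.indicator (Zres k₂ k₃ j₂ j₃ q) (fun _ => L) ζ := by
    intro ζ
    by_cases hz : ζ ∈ Zres k₂ k₃ j₂ j₃ q
    · rw [Set.indicator_of_mem hz]
      rcases le_total j₂ j₃ with hj | hj
      · have hsub : Prod.mk ζ ⁻¹' {p : GG | (p.1 - q.1, p.2 - q.2) ∈ DZ k₂ j₂ ∧ p ∈ DZ k₃ j₃} ⊆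
            Set.Icc (q.2 + omegaZK (ζ - q.1) - 2 ^ (j₂:ℤ))
              (q.2 + omegaZK (ζ - q.1) + 2 ^ (j₂:ℤ)) := by
          intro τ hτ
          have h0 := hτ.1.2.2
          dsimp only at h0
          have h := abs_le.mp h0
          exact Set.mem_Icc.mpr ⟨by linarith [h.1], by linarith [h.2]⟩
        calc volume _ ≤ volume (Set.Icc (q.2 + omegaZK (ζ - q.1) - 2 ^ (j₂:ℤ))
              (q.2 + omegaZK (ζ - q.1) + 2 ^ (j₂:ℤ))) := measure_mono hsub
        _ = ENNReal.ofReal (2 * 2 ^ (j₂:ℤ)) := by rw [Real.volume_Icc]; ring_nf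
        _ ≤ L := by
            rw [hLdef]
            apply ENNReal.ofReal_le_ofReal
            rw [min_eq_left hj, zpow_natCast, pow_succ]
            linarith [pow_pos (by norm_num : (0:ℝ) < 2) j₂]
      · have hsub : Prod.mk ζ ⁻¹' {p : GG | (p.1 - q.1, p.2 - q.2) ∈ DZ k₂ j₂ ∧ p ∈ DZ k₃ j₃} ⊆
            Set.Icc (omegaZK ζ - 2 ^ (j₃:ℤ)) (omegaZK ζ + 2 ^ (j₃:ℤ)) := by
          intro τ hτ
          have h0 := hτ.2.2.2
          dsimp only at h0
          have h := abs_le.mp h0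
          exact Set.mem_Icc.mpr ⟨by linarith [h.1], by linarith [h.2]⟩
        calc volume _ ≤ volume (Set.Icc (omegaZK ζ - 2 ^ (j₃:ℤ)) (omegaZK ζ + 2 ^ (j₃:ℤ))) :=
              measure_mono hsub
        _ = ENNReal.ofReal (2 * 2 ^ (j₃:ℤ)) := by rw [Real.volume_Icc]; ring_nf
        _ ≤ L := by
            rw [hLdef]
            apply ENNReal.ofReal_le_ofReal
            rw [min_eq_right hj, zpow_natCast, pow_succ]
            linarith [pow_pos (by norm_num : (0:ℝ) < 2) j₃]
    · rw [Set.indicator_of_notMem hz]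
      have hempty : Prod.mk ζ ⁻¹' {p : GG | (p.1 - q.1, p.2 - q.2) ∈ DZ k₂ j₂ ∧ p ∈ DZ k₃ j₃}
          = ∅ := by
        rw [Set.eq_empty_iff_forall_notMem]
        intro τ hτ
        apply hz
        refine ⟨hτ.1.2.1, hτ.2.1, ?_⟩
        have h20 := hτ.1.2.2
        have h30 := hτ.2.2.2
        dsimp only at h20 h30
        have h2 := abs_le.mp h20
        have h3 := abs_le.mp h30
        rw [hω ζ, abs_le]
        constructor <;> linarith [h2.1, h2.2, h3.1, h3.2]
      rw [hempty]
      simp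
  -- the Finset cover of Zres
  obtain ⟨B, hBdef⟩ : ∃ B : ℤ, B = 2 ^ eexp k₁ j₂ j₃ := ⟨_, rfl⟩
  have hB1 : 1 ≤ B := by rw [hBdef]; exact one_le_pow₀ (by norm_num)
  obtain ⟨gch, hgch⟩ : ∃ gch : ℤ → ℤ, ∀ η : ℤ,
      (∃ ξ0 : ℤ, (ξ0, η) ∈ Zres k₂ k₃ j₂ j₃ q) → (gch η, η) ∈ Zres k₂ k₃ j₂ j₃ q := by
    refine ⟨fun η => if h : ∃ ξ0 : ℤ, (ξ0, η) ∈ Zres k₂ k₃ j₂ j₃ q then h.choose else 0, ?_⟩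
    intro η hex
    simp only [dif_pos hex]
    exact hex.choose_spec
  obtain ⟨𝒜, h𝒜⟩ : ∃ 𝒜 : Finset (ℤ × ℤ), 𝒜 = (Finset.Icc (q.1.2 - 2 ^ k₂) (q.1.2 + 2 ^ k₂)).biUnion
      (fun η => (Finset.Icc (gch η - B) (gch η + B)).image fun ξ => (ξ, η)) := ⟨_, rfl⟩
  have hZA : Zres k₂ k₃ j₂ j₃ q ⊆ ↑𝒜 := by
    rintro ⟨ξ, η⟩ hmem
    have hsq : (((ξ - q.1.1 : ℤ):ℝ)) ^ 2 + ((η - q.1.2 : ℤ):ℝ) ^ 2 < ((2:ℝ) ^ (k₂:ℕ)) ^ 2 := by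
      have h1 := hmem.1
      rw [show ((2:ℝ) ^ (k₂:ℤ)) = (2:ℝ) ^ (k₂:ℕ) from zpow_natCast 2 k₂] at h1
      exact (Real.sqrt_lt' (by positivity)).mp h1
    have hη : η ∈ Finset.Icc (q.1.2 - 2 ^ k₂) (q.1.2 + 2 ^ k₂) := by
      have habsr : |((η - q.1.2 : ℤ):ℝ)| < (2:ℝ) ^ (k₂:ℕ) := by
        apply abs_lt_of_sq_lt_sq'' _ (by positivity)
        have := sq_nonneg (((ξ - q.1.1 : ℤ):ℝ))
        linarith
      have : |η - q.1.2| < (2:ℤ) ^ (k₂:ℕ) := by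
        have hcast : ((|η - q.1.2| : ℤ) : ℝ) < (((2:ℤ) ^ (k₂:ℕ) : ℤ) : ℝ) := by
          push_cast
          rw [← Int.cast_abs] at habsr
          push_cast at habsr
          exact habsr
        exact_mod_cast hcast
      have h5 := abs_lt.mp this
      exact Finset.mem_Icc.mpr ⟨by omega, by omega⟩
    have hex : ∃ ξ0 : ℤ, (ξ0, η) ∈ Zres k₂ k₃ j₂ j₃ q := ⟨ξ, hmem⟩
    have ha := hgch η hex
    have hξIcc : ξ ∈ Finset.Icc (gch η - B) (gch η + B) := by
      rcases le_total ξ (gch η) with hc | hc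
      · have := sep k₁ k₂ k₃ j₂ j₃ hk23 hk31 hk1 q η ξ (gch η) hc hmem ha
        rw [← hBdef] at this
        exact Finset.mem_Icc.mpr ⟨by omega, by omega⟩
      · have := sep k₁ k₂ k₃ j₂ j₃ hk23 hk31 hk1 q η (gch η) ξ hc ha hmem
        rw [← hBdef] at this
        exact Finset.mem_Icc.mpr ⟨by omega, by omega⟩
    rw [h𝒜]
    refine Finset.mem_coe.mpr (Finset.mem_biUnion.mpr ⟨η, hη, Finset.mem_image.mpr ⟨ξ, hξIcc, rfl⟩⟩)
  have hcard : 𝒜.card ≤ 2 ^ (k₂ + eexp k₁ j₂ j₃ + 4) := by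
    rw [h𝒜]
    calc ((Finset.Icc (q.1.2 - 2 ^ k₂) (q.1.2 + 2 ^ k₂)).biUnion
        (fun η => (Finset.Icc (gch η - B) (gch η + B)).image fun ξ => (ξ, η))).card
        ≤ ∑ η ∈ Finset.Icc (q.1.2 - 2 ^ k₂) (q.1.2 + 2 ^ k₂),
          ((Finset.Icc (gch η - B) (gch η + B)).image fun ξ => (ξ, η)).card :=
          Finset.card_biUnion_le
      _ ≤ ∑ η ∈ Finset.Icc (q.1.2 - 2 ^ k₂) (q.1.2 + 2 ^ k₂), 2 ^ (eexp k₁ j₂ j₃ + 2) := by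
          refine Finset.sum_le_sum fun η _ => ?_
          refine Finset.card_image_le.trans ?_
          rw [Int.card_Icc]
          refine Int.toNat_le.mpr ?_
          push_cast
          have h4 : (2:ℤ) ^ (eexp k₁ j₂ j₃ + 2) = 4 * B := by rw [hBdef]; ring
          rw [h4]
          omega
      _ = (Finset.Icc (q.1.2 - 2 ^ k₂) (q.1.2 + 2 ^ k₂)).card * 2 ^ (eexp k₁ j₂ j₃ + 2) := by
          rw [Finset.sum_const, smul_eq_mul]
      _ ≤ 2 ^ (k₂ + 2) * 2 ^ (eexp k₁ j₂ j₃ + 2) := by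
          have hcc : (Finset.Icc (q.1.2 - 2 ^ k₂) (q.1.2 + 2 ^ k₂)).card ≤ 2 ^ (k₂ + 2) := by
            rw [Int.card_Icc]
            refine Int.toNat_le.mpr ?_
            push_cast
            have h1 : (1:ℤ) ≤ 2 ^ k₂ := one_le_pow₀ (by norm_num)
            have h4 : (2:ℤ) ^ (k₂ + 2) = 4 * 2 ^ k₂ := by ring
            rw [h4]
            linarith
          exact Nat.mul_le_mul_right _ hcc
      _ = 2 ^ (k₂ + eexp k₁ j₂ j₃ + 4) := by rw [← pow_add]; congr 1; omega
  have hcount : Measure.count (Zres k₂ k₃ j₂ j₃ q) ≤ (2:ℝ≥0∞) ^ (k₂ + eexp k₁ j₂ j₃ + 4) := by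
    calc Measure.count (Zres k₂ k₃ j₂ j₃ q) ≤ Measure.count (↑𝒜 : Set (ℤ × ℤ)) :=
        measure_mono hZA
      _ = 𝒜.card := Measure.count_apply_finset 𝒜
      _ ≤ ((2 ^ (k₂ + eexp k₁ j₂ j₃ + 4) : ℕ) : ℝ≥0∞) := by exact_mod_cast hcard
      _ = (2:ℝ≥0∞) ^ (k₂ + eexp k₁ j₂ j₃ + 4) := by push_cast; rfl
  have hL2 : L = (2:ℝ≥0∞) ^ (min j₂ j₃ + 1) := by
    rw [hLdef, ENNReal.ofReal_pow (by norm_num)]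
    norm_num
  calc muZ {p : GG | (p.1 - q.1, p.2 - q.2) ∈ DZ k₂ j₂ ∧ p ∈ DZ k₃ j₃}
      = ∑' ζ : ℤ × ℤ, volume (Prod.mk ζ ⁻¹'
          {p : GG | (p.1 - q.1, p.2 - q.2) ∈ DZ k₂ j₂ ∧ p ∈ DZ k₃ j₃}) := by
        rw [muZ, Measure.prod_apply (measurableSet_E k₂ k₃ j₂ j₃ q), lintegral_count]
    _ ≤ ∑' ζ : ℤ × ℤ, Set.indicator (Zres k₂ k₃ j₂ j₃ q) (fun _ => L) ζ :=
        ENNReal.tsum_le_tsum hsec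
    _ = ∫⁻ ζ, Set.indicator (Zres k₂ k₃ j₂ j₃ q) (fun _ => L) ζ ∂Measure.count :=
        (lintegral_count _).symm
    _ = L * Measure.count (Zres k₂ k₃ j₂ j₃ q) :=
        lintegral_indicator_const (measSet_Z2 _) L
    _ ≤ L * (2:ℝ≥0∞) ^ (k₂ + eexp k₁ j₂ j₃ + 4) := mul_le_mul_right hcount L
    _ = (2:ℝ≥0∞) ^ (min j₂ j₃ + 1) * (2:ℝ≥0∞) ^ (k₂ + eexp k₁ j₂ j₃ + 4) := by rw [hL2]
    _ = (2:ℝ≥0∞) ^ (min j₂ j₃ + k₂ + eexp k₁ j₂ j₃ + 5) := by rw [← pow_add]; congr 1; omega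

lemma conj22 : (2:ℝ).HolderConjugate 2 := Real.HolderConjugate.two_two

lemma ofReal_ne_top' (x : ℝ) : ENNReal.ofReal x ≠ ⊤ := ENNReal.ofReal_ne_top

lemma core (k₁ k₂ k₃ j₂ j₃ : ℕ) (hk13 : |(k₁:ℤ) - (k₃:ℤ)| ≤ 5) (hk2 : (k₂:ℤ) ≤ (k₁:ℤ) - 10)
    (f₁ f₂ f₃ : GG → ℝ) (m₁ : Measurable f₁) (m₂ : Measurable f₂) (m₃ : Measurable f₃)
    (s₂ : Function.support f₂ ⊆ DZ k₂ j₂) (s₃ : Function.support f₃ ⊆ DZ k₃ j₃) :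
    ∫⁻ p, convZ f₁ f₂ p * ENNReal.ofReal (f₃ p) ∂muZ ≤
      ((2:ℝ≥0∞) ^ (min j₂ j₃ + k₂ + eexp k₁ j₂ j₃ + 5)) ^ ((1:ℝ)/2) *
        ((∫⁻ p, ENNReal.ofReal (f₁ p) ^ (2:ℝ) ∂muZ) ^ ((1:ℝ)/2) *
         (∫⁻ p, ENNReal.ofReal (f₂ p) ^ (2:ℝ) ∂muZ) ^ ((1:ℝ)/2) *
         (∫⁻ p, ENNReal.ofReal (f₃ p) ^ (2:ℝ) ∂muZ) ^ ((1:ℝ)/2)) := by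
  have hF₁ : Measurable fun p : GG => ENNReal.ofReal (f₁ p) := ENNReal.measurable_ofReal.comp m₁
  have hF₂ : Measurable fun p : GG => ENNReal.ofReal (f₂ p) := ENNReal.measurable_ofReal.comp m₂
  have hF₃ : Measurable fun p : GG => ENNReal.ofReal (f₃ p) := ENNReal.measurable_ofReal.comp m₃
  have hsubm : Measurable fun x : GG × GG => (x.2.1 - x.1.1, x.2.2 - x.1.2) :=
    (((meas_Z2 (fun z : ℤ × ℤ => z)).comp (measurable_fst.comp measurable_snd)).sub
      ((meas_Z2 (fun z : ℤ × ℤ => z)).comp (measurable_fst.comp measurable_fst))).prod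
      ((measurable_snd.comp measurable_snd).sub (measurable_snd.comp measurable_fst))
  have hF₂shift : Measurable fun x : GG × GG => ENNReal.ofReal (f₂ (x.2.1 - x.1.1, x.2.2 - x.1.2)) :=
    (ENNReal.measurable_ofReal.comp m₂).comp hsubm
  -- the inner function H
  obtain ⟨H, hHdef⟩ : ∃ H : GG → ℝ≥0∞, H = fun q => ∫⁻ p,
      ENNReal.ofReal (f₂ (p.1 - q.1, p.2 - q.2)) * ENNReal.ofReal (f₃ p) ∂muZ := ⟨_, rfl⟩
  have hHmeas : Measurable H := by
    rw [hHdef]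
    exact Measurable.lintegral_prod_right'
      (f := fun x : GG × GG => ENNReal.ofReal (f₂ (x.2.1 - x.1.1, x.2.2 - x.1.2)) *
        ENNReal.ofReal (f₃ x.2))
      (hF₂shift.mul (hF₃.comp measurable_snd))
  -- Step 1: rewrite the integrand
  have hconv : ∀ p : GG, convZ f₁ f₂ p * ENNReal.ofReal (f₃ p) =
      ∫⁻ q, ENNReal.ofReal (f₁ q) * ENNReal.ofReal (f₂ (p.1 - q.1, p.2 - q.2)) *
        ENNReal.ofReal (f₃ p) ∂muZ := by
    intro p
    have hm : Measurable fun q : GG =>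
        ENNReal.ofReal (f₁ q) * ENNReal.ofReal (f₂ (p.1 - q.1, p.2 - q.2)) := by
      refine hF₁.mul ?_
      exact (ENNReal.measurable_ofReal.comp m₂).comp
        (((meas_Z2 (fun z : ℤ × ℤ => p.1 - z)).comp measurable_fst).prod
          (measurable_const.sub measurable_snd))
    have h1 : convZ f₁ f₂ p = ∫⁻ q, ENNReal.ofReal (f₁ q) *
        ENNReal.ofReal (f₂ (p.1 - q.1, p.2 - q.2)) ∂muZ := by
      rw [lintegral_muZ _ hm.aemeasurable]
      rfl
    rw [h1]
    exact (lintegral_mul_const' _ _ (ofReal_ne_top' _)).symm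
  have hΨmeas : Measurable fun x : GG × GG => ENNReal.ofReal (f₁ x.2) *
      ENNReal.ofReal (f₂ (x.1.1 - x.2.1, x.1.2 - x.2.2)) * ENNReal.ofReal (f₃ x.1) := by
    refine Measurable.mul ?_ (hF₃.comp measurable_fst)
    refine Measurable.mul (hF₁.comp measurable_snd) ?_
    refine (ENNReal.measurable_ofReal.comp m₂).comp ?_
    exact (((meas_Z2 (fun z : ℤ × ℤ => z)).comp (measurable_fst.comp measurable_fst)).sub
      ((meas_Z2 (fun z : ℤ × ℤ => z)).comp (measurable_fst.comp measurable_snd))).prod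
      ((measurable_snd.comp measurable_fst).sub (measurable_snd.comp measurable_snd))
  have hswap : ∫⁻ p, (∫⁻ q, ENNReal.ofReal (f₁ q) *
        ENNReal.ofReal (f₂ (p.1 - q.1, p.2 - q.2)) * ENNReal.ofReal (f₃ p) ∂muZ) ∂muZ =
      ∫⁻ q, (∫⁻ p, ENNReal.ofReal (f₁ q) *
        ENNReal.ofReal (f₂ (p.1 - q.1, p.2 - q.2)) * ENNReal.ofReal (f₃ p) ∂muZ) ∂muZ := by
    exact lintegral_lintegral_swap (f := fun (p q : GG) => ENNReal.ofReal (f₁ q) *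
      ENNReal.ofReal (f₂ (p.1 - q.1, p.2 - q.2)) * ENNReal.ofReal (f₃ p)) hΨmeas.aemeasurable
  have hpull : ∀ q : GG, (∫⁻ p, ENNReal.ofReal (f₁ q) *
      ENNReal.ofReal (f₂ (p.1 - q.1, p.2 - q.2)) * ENNReal.ofReal (f₃ p) ∂muZ) =
      ENNReal.ofReal (f₁ q) * H q := by
    intro q
    rw [hHdef]
    simp_rw [mul_assoc]
    exact lintegral_const_mul' _ _ (ofReal_ne_top' _)
  -- Cauchy-Schwarz step 1
  have hCS1 : ∫⁻ q, ENNReal.ofReal (f₁ q) * H q ∂muZ ≤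
      (∫⁻ p, ENNReal.ofReal (f₁ p) ^ (2:ℝ) ∂muZ) ^ ((1:ℝ)/2) *
      (∫⁻ q, H q ^ (2:ℝ) ∂muZ) ^ ((1:ℝ)/2) :=
    ENNReal.lintegral_mul_le_Lp_mul_Lq muZ conj22 hF₁.aemeasurable hHmeas.aemeasurable
  -- pointwise Cauchy-Schwarz for H
  obtain ⟨MM, hMM⟩ : ∃ MM : ℕ, MM = min j₂ j₃ + k₂ + eexp k₁ j₂ j₃ + 5 := ⟨_, rfl⟩
  have hHsq : ∀ q : GG, H q ^ (2:ℝ) ≤ (2:ℝ≥0∞) ^ MM *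
      ∫⁻ p, ENNReal.ofReal (f₂ (p.1 - q.1, p.2 - q.2)) ^ (2:ℝ) *
        ENNReal.ofReal (f₃ p) ^ (2:ℝ) ∂muZ := by
    intro q
    have hE := measurableSet_E k₂ k₃ j₂ j₃ q
    have hindic : ∀ p : GG, ENNReal.ofReal (f₂ (p.1 - q.1, p.2 - q.2)) * ENNReal.ofReal (f₃ p) =
        ({p : GG | (p.1 - q.1, p.2 - q.2) ∈ DZ k₂ j₂ ∧ p ∈ DZ k₃ j₃}.indicator
          (fun _ => (1:ℝ≥0∞)) p) *
        (ENNReal.ofReal (f₂ (p.1 - q.1, p.2 - q.2)) * ENNReal.ofReal (f₃ p)) := by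
      intro p
      by_cases hp : p ∈ {p : GG | (p.1 - q.1, p.2 - q.2) ∈ DZ k₂ j₂ ∧ p ∈ DZ k₃ j₃}
      · rw [Set.indicator_of_mem hp, one_mul]
      · rw [Set.indicator_of_notMem hp, zero_mul]
        rcases not_and_or.mp hp with h | h
        · have hz : f₂ (p.1 - q.1, p.2 - q.2) = 0 := by
            by_contra hne; exact h (s₂ hne)
          rw [hz, ENNReal.ofReal_zero, zero_mul]
        · have hz : f₃ p = 0 := by by_contra hne; exact h (s₃ hne)
          rw [hz, ENNReal.ofReal_zero, mul_zero]
    have hfgmeas : Measurable fun p : GG =>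
        ENNReal.ofReal (f₂ (p.1 - q.1, p.2 - q.2)) * ENNReal.ofReal (f₃ p) := by
      refine Measurable.mul ?_ hF₃
      exact (ENNReal.measurable_ofReal.comp m₂).comp
        (((meas_Z2 (fun z : ℤ × ℤ => z - q.1)).comp measurable_fst).prod
          (measurable_snd.sub measurable_const))
    have hCS2 : H q ≤
        (∫⁻ p, ({p : GG | (p.1 - q.1, p.2 - q.2) ∈ DZ k₂ j₂ ∧ p ∈ DZ k₃ j₃}.indicator
            (fun _ => (1:ℝ≥0∞)) p) ^ (2:ℝ) ∂muZ) ^ ((1:ℝ)/2) *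
        (∫⁻ p, (ENNReal.ofReal (f₂ (p.1 - q.1, p.2 - q.2)) *
            ENNReal.ofReal (f₃ p)) ^ (2:ℝ) ∂muZ) ^ ((1:ℝ)/2) := by
      have h0 : H q = ∫⁻ p,
          ({p : GG | (p.1 - q.1, p.2 - q.2) ∈ DZ k₂ j₂ ∧ p ∈ DZ k₃ j₃}.indicator
            (fun _ => (1:ℝ≥0∞)) p) *
          (ENNReal.ofReal (f₂ (p.1 - q.1, p.2 - q.2)) * ENNReal.ofReal (f₃ p)) ∂muZ := by
        rw [hHdef]
        exact lintegral_congr hindic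
      rw [h0]
      exact ENNReal.lintegral_mul_le_Lp_mul_Lq muZ conj22
        ((measurable_one.indicator hE).aemeasurable) hfgmeas.aemeasurable
    have hind2 : ∫⁻ p, ({p : GG | (p.1 - q.1, p.2 - q.2) ∈ DZ k₂ j₂ ∧ p ∈ DZ k₃ j₃}.indicator
        (fun _ => (1:ℝ≥0∞)) p) ^ (2:ℝ) ∂muZ =
        muZ {p : GG | (p.1 - q.1, p.2 - q.2) ∈ DZ k₂ j₂ ∧ p ∈ DZ k₃ j₃} := by
      have hpt : ∀ p : GG, ({p : GG | (p.1 - q.1, p.2 - q.2) ∈ DZ k₂ j₂ ∧ p ∈ DZ k₃ j₃}.indicator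
          (fun _ => (1:ℝ≥0∞)) p) ^ (2:ℝ) =
          {p : GG | (p.1 - q.1, p.2 - q.2) ∈ DZ k₂ j₂ ∧ p ∈ DZ k₃ j₃}.indicator
            (fun _ => (1:ℝ≥0∞)) p := by
        intro p
        by_cases hp : p ∈ {p : GG | (p.1 - q.1, p.2 - q.2) ∈ DZ k₂ j₂ ∧ p ∈ DZ k₃ j₃}
        · rw [Set.indicator_of_mem hp, ENNReal.one_rpow]
        · rw [Set.indicator_of_notMem hp, ENNReal.zero_rpow_of_pos (by norm_num)]
      rw [lintegral_congr hpt, lintegral_indicator_const hE, one_mul]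
    -- square hCS2
    rw [hind2] at hCS2
    have hsq := ENNReal.rpow_le_rpow hCS2 (by norm_num : (0:ℝ) ≤ 2)
    rw [ENNReal.mul_rpow_of_nonneg _ _ (by norm_num : (0:ℝ) ≤ 2)] at hsq
    rw [← ENNReal.rpow_mul, ← ENNReal.rpow_mul] at hsq
    rw [show ((1:ℝ)/2) * 2 = 1 by norm_num, ENNReal.rpow_one, ENNReal.rpow_one] at hsq
    refine hsq.trans ?_
    have hmle : muZ {p : GG | (p.1 - q.1, p.2 - q.2) ∈ DZ k₂ j₂ ∧ p ∈ DZ k₃ j₃} ≤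
        (2:ℝ≥0∞) ^ MM := by
      rw [hMM]; exact measure_E_le k₁ k₂ k₃ j₂ j₃ hk13 hk2 q
    refine mul_le_mul' hmle (le_of_eq ?_)
    refine lintegral_congr fun p => ?_
    rw [ENNReal.mul_rpow_of_nonneg _ _ (by norm_num : (0:ℝ) ≤ 2)]
  -- integrate hHsq
  have hF₂sq : Measurable fun r : GG => ENNReal.ofReal (f₂ r) ^ (2:ℝ) :=
    hF₂.pow_const _
  have hHint : ∫⁻ q, H q ^ (2:ℝ) ∂muZ ≤ (2:ℝ≥0∞) ^ MM *
      ((∫⁻ p, ENNReal.ofReal (f₂ p) ^ (2:ℝ) ∂muZ) *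
       (∫⁻ p, ENNReal.ofReal (f₃ p) ^ (2:ℝ) ∂muZ)) := by
    have hmeas2 : Measurable fun x : GG × GG =>
        ENNReal.ofReal (f₂ (x.1.1 - x.2.1, x.1.2 - x.2.2)) ^ (2:ℝ) *
        ENNReal.ofReal (f₃ x.1) ^ (2:ℝ) := by
      refine Measurable.mul ?_ ((hF₃.comp measurable_fst).pow_const _)
      refine ((ENNReal.measurable_ofReal.comp m₂).comp ?_).pow_const _
      exact (((meas_Z2 (fun z : ℤ × ℤ => z)).comp (measurable_fst.comp measurable_fst)).sub
        ((meas_Z2 (fun z : ℤ × ℤ => z)).comp (measurable_fst.comp measurable_snd))).prod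
        ((measurable_snd.comp measurable_fst).sub (measurable_snd.comp measurable_snd))
    calc ∫⁻ q, H q ^ (2:ℝ) ∂muZ
        ≤ ∫⁻ q, (2:ℝ≥0∞) ^ MM * ∫⁻ p, ENNReal.ofReal (f₂ (p.1 - q.1, p.2 - q.2)) ^ (2:ℝ) *
            ENNReal.ofReal (f₃ p) ^ (2:ℝ) ∂muZ ∂muZ := lintegral_mono hHsq
      _ = (2:ℝ≥0∞) ^ MM * ∫⁻ q, ∫⁻ p, ENNReal.ofReal (f₂ (p.1 - q.1, p.2 - q.2)) ^ (2:ℝ) *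
            ENNReal.ofReal (f₃ p) ^ (2:ℝ) ∂muZ ∂muZ :=
          lintegral_const_mul' _ _ (by simp)
      _ = (2:ℝ≥0∞) ^ MM * ∫⁻ p, ∫⁻ q, ENNReal.ofReal (f₂ (p.1 - q.1, p.2 - q.2)) ^ (2:ℝ) *
            ENNReal.ofReal (f₃ p) ^ (2:ℝ) ∂muZ ∂muZ := by
          congr 1
          exact lintegral_lintegral_swap (f := fun (q p : GG) =>
            ENNReal.ofReal (f₂ (p.1 - q.1, p.2 - q.2)) ^ (2:ℝ) *
            ENNReal.ofReal (f₃ p) ^ (2:ℝ))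
            (by
              have : Measurable fun x : GG × GG =>
                  ENNReal.ofReal (f₂ (x.2.1 - x.1.1, x.2.2 - x.1.2)) ^ (2:ℝ) *
                  ENNReal.ofReal (f₃ x.2) ^ (2:ℝ) := by
                refine Measurable.mul ?_ ((hF₃.comp measurable_snd).pow_const _)
                exact (hF₂shift).pow_const _
              exact this.aemeasurable)
      _ = (2:ℝ≥0∞) ^ MM * ∫⁻ p, (∫⁻ q, ENNReal.ofReal (f₂ (p.1 - q.1, p.2 - q.2)) ^ (2:ℝ) ∂muZ) *
            ENNReal.ofReal (f₃ p) ^ (2:ℝ) ∂muZ := by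
          congr 1
          refine lintegral_congr fun p => ?_
          exact lintegral_mul_const' _ _
            (ENNReal.rpow_ne_top_of_nonneg (by norm_num) (ofReal_ne_top' _))
      _ = (2:ℝ≥0∞) ^ MM * ∫⁻ p, (∫⁻ r, ENNReal.ofReal (f₂ r) ^ (2:ℝ) ∂muZ) *
            ENNReal.ofReal (f₃ p) ^ (2:ℝ) ∂muZ := by
          congr 1
          refine lintegral_congr fun p => ?_
          congr 1
          exact lintegral_muZ_sub (fun r => ENNReal.ofReal (f₂ r) ^ (2:ℝ)) hF₂sq p
      _ = (2:ℝ≥0∞) ^ MM * ((∫⁻ p, ENNReal.ofReal (f₂ p) ^ (2:ℝ) ∂muZ) *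
            (∫⁻ p, ENNReal.ofReal (f₃ p) ^ (2:ℝ) ∂muZ)) := by
          congr 1
          exact lintegral_const_mul'' _ ((hF₃.pow_const _).aemeasurable)
  -- assemble
  calc ∫⁻ p, convZ f₁ f₂ p * ENNReal.ofReal (f₃ p) ∂muZ
      = ∫⁻ p, ∫⁻ q, ENNReal.ofReal (f₁ q) * ENNReal.ofReal (f₂ (p.1 - q.1, p.2 - q.2)) *
          ENNReal.ofReal (f₃ p) ∂muZ ∂muZ := lintegral_congr hconv
    _ = ∫⁻ q, ∫⁻ p, ENNReal.ofReal (f₁ q) * ENNReal.ofReal (f₂ (p.1 - q.1, p.2 - q.2)) *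
          ENNReal.ofReal (f₃ p) ∂muZ ∂muZ := hswap
    _ = ∫⁻ q, ENNReal.ofReal (f₁ q) * H q ∂muZ := lintegral_congr hpull
    _ ≤ (∫⁻ p, ENNReal.ofReal (f₁ p) ^ (2:ℝ) ∂muZ) ^ ((1:ℝ)/2) *
        (∫⁻ q, H q ^ (2:ℝ) ∂muZ) ^ ((1:ℝ)/2) := hCS1
    _ ≤ (∫⁻ p, ENNReal.ofReal (f₁ p) ^ (2:ℝ) ∂muZ) ^ ((1:ℝ)/2) *
        ((2:ℝ≥0∞) ^ MM * ((∫⁻ p, ENNReal.ofReal (f₂ p) ^ (2:ℝ) ∂muZ) *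
          (∫⁻ p, ENNReal.ofReal (f₃ p) ^ (2:ℝ) ∂muZ))) ^ ((1:ℝ)/2) := by
        exact mul_le_mul_right (ENNReal.rpow_le_rpow hHint (by norm_num)) _
    _ = ((2:ℝ≥0∞) ^ MM) ^ ((1:ℝ)/2) *
        ((∫⁻ p, ENNReal.ofReal (f₁ p) ^ (2:ℝ) ∂muZ) ^ ((1:ℝ)/2) *
         (∫⁻ p, ENNReal.ofReal (f₂ p) ^ (2:ℝ) ∂muZ) ^ ((1:ℝ)/2) *
         (∫⁻ p, ENNReal.ofReal (f₃ p) ^ (2:ℝ) ∂muZ) ^ ((1:ℝ)/2)) := by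
        rw [ENNReal.mul_rpow_of_nonneg _ _ (by norm_num : (0:ℝ) ≤ (1:ℝ)/2),
          ENNReal.mul_rpow_of_nonneg _ _ (by norm_num : (0:ℝ) ≤ (1:ℝ)/2)]
        ring
  rw [hMM]

lemma ofReal_rpow2 (x : ℝ) : ENNReal.ofReal ((2:ℝ) ^ x) = (2:ℝ≥0∞) ^ x := by
  rw [← ENNReal.ofReal_rpow_of_pos (by norm_num : (0:ℝ) < 2)]
  norm_num

lemma coeff_le (k₁ k₂ j₂ j₃ : ℕ) (hk1 : 10 ≤ k₁) :
    ((2:ℝ≥0∞) ^ (min j₂ j₃ + k₂ + eexp k₁ j₂ j₃ + 5)) ^ ((1:ℝ)/2) ≤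
      ENNReal.ofReal ((2:ℝ) ^ (20:ℕ) * (2:ℝ) ^ ((j₂:ℝ)/2) * (2:ℝ) ^ ((k₂:ℝ)/2) *
        (1 + (2:ℝ) ^ (((j₃:ℝ) - 2 * (k₁:ℝ))/2))) := by
  have h2pos : ∀ x : ℝ, (0:ℝ) < 2 ^ x := fun x => Real.rpow_pos_of_pos (by norm_num) x
  have hR : ENNReal.ofReal ((2:ℝ) ^ (20:ℕ) * (2:ℝ) ^ ((j₂:ℝ)/2) * (2:ℝ) ^ ((k₂:ℝ)/2) *
      (1 + (2:ℝ) ^ (((j₃:ℝ) - 2 * (k₁:ℝ))/2))) =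
      (2:ℝ≥0∞) ^ ((20:ℝ)) * (2:ℝ≥0∞) ^ ((j₂:ℝ)/2) * (2:ℝ≥0∞) ^ ((k₂:ℝ)/2) *
      (1 + (2:ℝ≥0∞) ^ (((j₃:ℝ) - 2 * (k₁:ℝ))/2)) := by
    rw [ENNReal.ofReal_mul (by positivity), ENNReal.ofReal_mul (by positivity),
      ENNReal.ofReal_mul (by positivity), ENNReal.ofReal_add (by norm_num) (h2pos _).le,
      ENNReal.ofReal_one, ofReal_rpow2, ofReal_rpow2, ofReal_rpow2]
    congr 1
    rw [show ((2:ℝ) ^ (20:ℕ)) = (2:ℝ) ^ ((20:ℕ):ℝ) from (Real.rpow_natCast 2 20).symm,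
      ofReal_rpow2]
    norm_num
  rw [hR]
  have hL : ((2:ℝ≥0∞) ^ (min j₂ j₃ + k₂ + eexp k₁ j₂ j₃ + 5)) ^ ((1:ℝ)/2) =
      (2:ℝ≥0∞) ^ (((min j₂ j₃ + k₂ + eexp k₁ j₂ j₃ + 5 : ℕ):ℝ) * ((1:ℝ)/2)) := by
    rw [← ENNReal.rpow_natCast, ← ENNReal.rpow_mul]
  rw [hL]
  have h2ne0 : (2:ℝ≥0∞) ≠ 0 := by norm_num
  have h2net : (2:ℝ≥0∞) ≠ ⊤ := by norm_num
  have hone : (1:ℝ≥0∞) ≤ 2 := by norm_num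
  have hmono : ∀ a b : ℝ, a ≤ b → (2:ℝ≥0∞) ^ a ≤ (2:ℝ≥0∞) ^ b := fun a b h =>
    ENNReal.rpow_le_rpow_of_exponent_le hone h
  by_cases he : eexp k₁ j₂ j₃ = 0
  · -- drop the (1 + z) factor
    have hz0 : (0:ℝ≥0∞) ≤ (2:ℝ≥0∞) ^ (((j₃:ℝ) - 2 * (k₁:ℝ))/2) := zero_le
    have h1 : (2:ℝ≥0∞) ^ (((min j₂ j₃ + k₂ + eexp k₁ j₂ j₃ + 5 : ℕ):ℝ) * ((1:ℝ)/2)) ≤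
        (2:ℝ≥0∞) ^ ((20:ℝ) + (j₂:ℝ)/2 + (k₂:ℝ)/2) := by
      apply hmono
      have hmin : ((min j₂ j₃ : ℕ):ℝ) ≤ (j₂:ℝ) := by exact_mod_cast min_le_left j₂ j₃
      rw [he]
      push_cast
      push_cast at hmin
      linarith
    refine h1.trans ?_
    rw [ENNReal.rpow_add _ _ h2ne0 h2net, ENNReal.rpow_add _ _ h2ne0 h2net]
    exact le_mul_of_one_le_right' (le_add_of_nonneg_right zero_le)
  · -- use the z term
    have hee : eexp k₁ j₂ j₃ + 2 * k₁ = max j₂ j₃ + 18 := by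
      unfold eexp at he ⊢
      omega
    have h1 : (2:ℝ≥0∞) ^ (((min j₂ j₃ + k₂ + eexp k₁ j₂ j₃ + 5 : ℕ):ℝ) * ((1:ℝ)/2)) ≤
        (2:ℝ≥0∞) ^ ((20:ℝ) + (j₂:ℝ)/2 + (k₂:ℝ)/2 + ((j₃:ℝ) - 2 * (k₁:ℝ))/2) := by
      apply hmono
      have hminmax : ((min j₂ j₃ : ℕ):ℝ) + ((max j₂ j₃ : ℕ):ℝ) = (j₂:ℝ) + (j₃:ℝ) := by
        exact_mod_cast congrArg (Nat.cast : ℕ → ℝ) (min_add_max j₂ j₃)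
      have heer : (eexp k₁ j₂ j₃ : ℝ) + 2 * (k₁:ℝ) = ((max j₂ j₃ : ℕ):ℝ) + 18 := by
        exact_mod_cast congrArg (Nat.cast : ℕ → ℝ) hee
      push_cast
      push_cast at hminmax heer
      linarith
    refine h1.trans ?_
    rw [ENNReal.rpow_add _ _ h2ne0 h2net, ENNReal.rpow_add _ _ h2ne0 h2net,
      ENNReal.rpow_add _ _ h2ne0 h2net]
    exact mul_le_mul_right (le_add_of_nonneg_left zero_le) _

lemma eLp_eq (f : GG → ℝ) (hf : ∀ p, 0 ≤ f p) :
    (∫⁻ p, ENNReal.ofReal (f p) ^ (2:ℝ) ∂muZ) ^ ((1:ℝ)/2) = eLpNorm f 2 muZ := by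
  rw [eLpNorm_eq_lintegral_rpow_enorm_toReal (by norm_num : (2:ℝ≥0∞) ≠ 0) (by norm_num : (2:ℝ≥0∞) ≠ ⊤)]
  have ht : ((2:ℝ≥0∞)).toReal = 2 := by norm_num
  rw [ht]
  congr 1
  refine lintegral_congr fun p => ?_
  rw [Real.enorm_eq_ofReal (hf p)]

end ZKaux

/-- Isotropic High×Low→High bilinear convolution estimate for the periodic
Zakharov-Kuznetsov equation: if `|k₁ - k₃| ≤ 5` and `k₂ ≤ k₁ - 10`, then
`∫ (f₁ * f₂) f₃ ≲ ‖f₁‖_{L²} 2^{j₂/2} 2^{k₂/2} ‖f₂‖_{L²} (1 + 2^{(j₃-2k₁)/2}) ‖f₃‖_{L²}`. -/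
theorem isotropic_bilinear_estimate_high_low :
    ∃ C > 0, ∀ (k₁ k₂ k₃ j₁ j₂ j₃ : ℕ),
      |(k₁ : ℤ) - (k₃ : ℤ)| ≤ 5 → (k₂ : ℤ) ≤ (k₁ : ℤ) - 10 →
      ∀ (f₁ f₂ f₃ : (ℤ × ℤ) × ℝ → ℝ),
      (∀ p, 0 ≤ f₁ p) → (∀ p, 0 ≤ f₂ p) → (∀ p, 0 ≤ f₃ p) →
      MemLp f₁ 2 muZ → MemLp f₂ 2 muZ → MemLp f₃ 2 muZ →
      Function.support f₁ ⊆ DZ k₁ j₁ →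
      Function.support f₂ ⊆ DZ k₂ j₂ →
      Function.support f₃ ⊆ DZ k₃ j₃ →
      ∫⁻ p, convZ f₁ f₂ p * ENNReal.ofReal (f₃ p) ∂muZ ≤
        ENNReal.ofReal (C * (2:ℝ) ^ ((j₂ : ℝ)/2) * (2:ℝ) ^ ((k₂ : ℝ)/2) *
            (1 + (2:ℝ) ^ (((j₃ : ℝ) - 2 * (k₁ : ℝ))/2))) *
          (eLpNorm f₁ 2 muZ * eLpNorm f₂ 2 muZ * eLpNorm f₃ 2 muZ) := by
  classical
  refine ⟨(2:ℝ) ^ (20:ℕ), by positivity, ?_⟩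
  intro k₁ k₂ k₃ j₁ j₂ j₃ hk13 hk2 f₁ f₂ f₃ h₁ h₂ h₃ hL₁ hL₂ hL₃ hs₁ hs₂ hs₃
  have hk1 : 10 ≤ k₁ := by omega
  have hrep : ∀ (f : ZKaux.GG → ℝ) (k j : ℕ), (∀ p, 0 ≤ f p) → Function.support f ⊆ DZ k j →
      MemLp f 2 muZ → ∃ g : ZKaux.GG → ℝ, Measurable g ∧ (∀ p, 0 ≤ g p) ∧
        Function.support g ⊆ DZ k j ∧ f =ᵐ[muZ] g := by
    intro f k j hf hsupp hmem
    obtain ⟨g₀, hg₀meas, hg₀ae⟩ : ∃ g₀ : ZKaux.GG → ℝ, Measurable g₀ ∧ f =ᵐ[muZ] g₀ := by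
      have ham := hmem.1.aemeasurable
      exact ⟨ham.mk f, ham.measurable_mk, ham.ae_eq_mk⟩
    refine ⟨fun p => if p ∈ DZ k j then max (g₀ p) 0 else 0, ?_, ?_, ?_, ?_⟩
    · exact Measurable.ite (ZKaux.measurableSet_DZ k j) (hg₀meas.max measurable_const)
        measurable_const
    · intro p; by_cases hp : p ∈ DZ k j <;> simp [hp, le_max_right]
    · intro p hp
      by_contra hnp
      simp only [Function.mem_support] at hp
      simp [hnp] at hp
    · filter_upwards [hg₀ae] with p hp
      by_cases hpD : p ∈ DZ k j
      · simp only [hpD, if_true]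
        rw [← hp]
        exact (max_eq_left (hf p)).symm
      · simp only [hpD, if_false]
        by_contra hne
        exact hpD (hsupp hne)
  obtain ⟨g₁, hm₁, hg₁pos, hgs₁, hae₁⟩ := hrep f₁ k₁ j₁ h₁ hs₁ hL₁
  obtain ⟨g₂, hm₂, hg₂pos, hgs₂, hae₂⟩ := hrep f₂ k₂ j₂ h₂ hs₂ hL₂
  obtain ⟨g₃, hm₃, hg₃pos, hgs₃, hae₃⟩ := hrep f₃ k₃ j₃ h₃ hs₃ hL₃
  have hLHS : ∫⁻ p, convZ f₁ f₂ p * ENNReal.ofReal (f₃ p) ∂muZ =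
      ∫⁻ p, convZ g₁ g₂ p * ENNReal.ofReal (g₃ p) ∂muZ := by
    refine lintegral_congr_ae ?_
    filter_upwards [hae₃] with p hp
    rw [ZKaux.convZ_congr hae₁ hae₂ p, hp]
  rw [hLHS, eLpNorm_congr_ae hae₁, eLpNorm_congr_ae hae₂, eLpNorm_congr_ae hae₃]
  have hg := ZKaux.core k₁ k₂ k₃ j₂ j₃ hk13 hk2 g₁ g₂ g₃ hm₁ hm₂ hm₃ hgs₂ hgs₃
  rw [ZKaux.eLp_eq g₁ hg₁pos, ZKaux.eLp_eq g₂ hg₂pos, ZKaux.eLp_eq g₃ hg₃pos] at hg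
  refine hg.trans ?_
  have hco := ZKaux.coeff_le k₁ k₂ j₂ j₃ hk1
  calc ((2:ℝ≥0∞) ^ (min j₂ j₃ + k₂ + ZKaux.eexp k₁ j₂ j₃ + 5)) ^ ((1:ℝ)/2) *
        (eLpNorm g₁ 2 muZ * eLpNorm g₂ 2 muZ * eLpNorm g₃ 2 muZ)
      ≤ ENNReal.ofReal ((2:ℝ) ^ (20:ℕ) * (2:ℝ) ^ ((j₂:ℝ)/2) * (2:ℝ) ^ ((k₂:ℝ)/2) *
          (1 + (2:ℝ) ^ (((j₃:ℝ) - 2 * (k₁:ℝ))/2))) *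
        (eLpNorm g₁ 2 muZ * eLpNorm g₂ 2 muZ * eLpNorm g₃ 2 muZ) :=
        mul_le_mul_left hco _
    _ = _ := rfl
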